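/- Let B be an edge-clean, trail-reachable bidirected graph rooted at r, and let x be a vertex lying in some trail-undirectable component of B. Then the maximum number of pairwise edge-disjoint r–x trails in B equals 1. -/

import Mathlib

/-- A bidirected graph: a loopless multigraph together with a signing of each
half-edge (edge-endpoint incidence) by a sign (`true` = `+`, `false` = `-`). -/
structure BidirGraph (V : Type) (E : Type) where
  ends : E → V × V
  sign : E → V → Bool
  loopless : ∀ e : E, (ends e).1 ≠ (ends e).2

namespace BidirGraph

variable {V E : Type}

/-- The head of an oriented edge `(e, b)`: `b = true` orients `e` from its first
endpoint to its second endpoint. -/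
def ohead (B : BidirGraph V E) (oe : E × Bool) : V :=
  if oe.2 then (B.ends oe.1).2 else (B.ends oe.1).1

/-- The tail of an oriented edge. -/
def otail (B : BidirGraph V E) (oe : E × Bool) : V :=
  if oe.2 then (B.ends oe.1).1 else (B.ends oe.1).2

/-- `e` is incident with `v`. -/
def Incident (B : BidirGraph V E) (e : E) (v : V) : Prop :=
  (B.ends e).1 = v ∨ (B.ends e).2 = v

/-- `L` is a trail starting at `v`: a sequence of oriented edges, with no repeated
underlying edge, consecutive edges sharing a vertex at which they have opposite signs. -/
def IsTrailFrom (B : BidirGraph V E) (v : V) (L : List (E × Bool)) : Prop :=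
  (L.map Prod.fst).Nodup ∧
  (∀ oe ∈ L.head?, B.otail oe = v) ∧
  L.Chain' (fun a b => B.ohead a = B.otail b ∧ B.sign a.1 (B.ohead a) ≠ B.sign b.1 (B.ohead a))

/-- The final vertex of a trail starting at `v`. -/
def trailEnd (B : BidirGraph V E) (v : V) (L : List (E × Bool)) : V :=
  match L.getLast? with
  | none => v
  | some oe => B.ohead oe

/-- The internal vertices of a trail: the heads of all edges except the last one. -/
def Internal (B : BidirGraph V E) (L : List (E × Bool)) : List V :=
  (L.map B.ohead).dropLast

/-- An `r`-trail: a trail starting at `r` with no internal vertex equal to `r`. -/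
def IsRTrail (B : BidirGraph V E) (r : V) (L : List (E × Bool)) : Prop :=
  B.IsTrailFrom r L ∧ ∀ v ∈ B.Internal L, v ≠ r

/-- The trail `L` ends at vertex `w` with sign `α`. -/
def EndsAtSigned (B : BidirGraph V E) (L : List (E × Bool)) (w : V) (α : Bool) : Prop :=
  ∃ oe, L.getLast? = some oe ∧ B.ohead oe = w ∧ B.sign oe.1 w = α

/-- A path: a trail with no repeated vertex. -/
def IsPathFrom (B : BidirGraph V E) (v : V) (L : List (E × Bool)) : Prop :=
  B.IsTrailFrom v L ∧ (v :: L.map B.ohead).Nodup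

/-- An almost path: a trail that is trivial or becomes a path after removing its last edge. -/
def IsAlmostPathFrom (B : BidirGraph V E) (v : V) (L : List (E × Bool)) : Prop :=
  B.IsTrailFrom v L ∧ (v :: B.Internal L).Nodup

/-- An edge is trail-undirectable if there are `r`-trails ending in both of its orientations. -/
def TrailUndirectable (B : BidirGraph V E) (r : V) (e : E) : Prop :=
  (∃ L, B.IsRTrail r L ∧ L.getLast? = some (e, true)) ∧
  (∃ L, B.IsRTrail r L ∧ L.getLast? = some (e, false))

/-- `(e, b)` is the natural orientation of the trail-directable edge `e`: `r`-trails end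
in the orientation `(e, b)` but not in the opposite orientation. -/
def NatOrient (B : BidirGraph V E) (r : V) (e : E) (b : Bool) : Prop :=
  (∃ L, B.IsRTrail r L ∧ L.getLast? = some (e, b)) ∧
  ¬ ∃ L, B.IsRTrail r L ∧ L.getLast? = some (e, !b)

/-- An edge is trail-directable if exactly one of its orientations is the final oriented
edge of some `r`-trail. -/
def TrailDirectable (B : BidirGraph V E) (r : V) (e : E) : Prop :=
  ∃ b, B.NatOrient r e b

/-- `B` is trail-reachable: every edge is the final edge of some `r`-trail. -/
def TrailReachable (B : BidirGraph V E) (r : V) : Prop :=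
  ∀ e : E, ∃ L b, B.IsRTrail r L ∧ L.getLast? = some (e, b)

/-- Adjacency of trail-undirectable edges: both undirectable and sharing an endpoint. -/
def UStep (B : BidirGraph V E) (r : V) (a b : E) : Prop :=
  B.TrailUndirectable r a ∧ B.TrailUndirectable r b ∧ ∃ v, B.Incident a v ∧ B.Incident b v

/-- `C` is (the edge set of) a nontrivial trail-undirectable component of `B`: the set of
trail-undirectable edges connected to some trail-undirectable edge `e` inside the subgraph
induced by the trail-undirectable edges. -/
def IsUComp (B : BidirGraph V E) (r : V) (C : Set E) : Prop :=
  ∃ e, B.TrailUndirectable r e ∧ C = {f | Relation.ReflTransGen (B.UStep r) e f}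

/-- `v` is a vertex of the edge set `C` (i.e. an endpoint of one of its edges). -/
def VC (B : BidirGraph V E) (C : Set E) (v : V) : Prop :=
  ∃ e ∈ C, B.Incident e v

/-- `B` is edge-clean: the root lies in no nontrivial trail-undirectable component. -/
def EdgeClean (B : BidirGraph V E) (r : V) : Prop :=
  ¬ ∃ C : Set E, B.IsUComp r C ∧ B.VC C r

/-- `B` is clean: there is no nontrivial almost path starting and ending at `r`. -/
def Clean (B : BidirGraph V E) (r : V) : Prop :=
  ¬ ∃ L, L ≠ ([] : List (E × Bool)) ∧ B.IsAlmostPathFrom r L ∧ B.trailEnd r L = r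

/-- A vertex is trail-solid if it is the root, or the head of the natural orientation of a
trail-directable edge, or incident with no trail-undirectable edge. -/
def TrailSolid (B : BidirGraph V E) (r v : V) : Prop :=
  v = r ∨ (∃ e b, B.NatOrient r e b ∧ B.ohead (e, b) = v) ∨
    (∀ e : E, B.Incident e v → ¬ B.TrailUndirectable r e)

/-- Two trails are edge-disjoint if no underlying edge occurs in both. -/
def EdgeDisj (L₁ L₂ : List (E × Bool)) : Prop :=
  ∀ (e : E) (b₁ b₂ : Bool), (e, b₁) ∈ L₁ → (e, b₂) ∈ L₂ → False

/-- Two paths are internally vertex-disjoint if they share no internal vertex. -/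
def IntDisj (B : BidirGraph V E) (L₁ L₂ : List (E × Bool)) : Prop :=
  ∀ w : V, w ∈ B.Internal L₁ → w ∈ B.Internal L₂ → False

end BidirGraph


section Aux
open BidirGraph List

variable {V E : Type}

/-- Flip the orientation of an oriented edge. -/
def eflip (oe : E × Bool) : E × Bool := (oe.1, !oe.2)

/-- The step relation for trails. -/
def Rstep (B : BidirGraph V E) (a b : E × Bool) : Prop :=
  B.ohead a = B.otail b ∧ B.sign a.1 (B.ohead a) ≠ B.sign b.1 (B.ohead a)

@[simp] lemma fst_eflip (oe : E × Bool) : (eflip oe).1 = oe.1 := rfl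

@[simp] lemma ohead_eflip (B : BidirGraph V E) (oe : E × Bool) :
    B.ohead (eflip oe) = B.otail oe := by
  obtain ⟨e, b⟩ := oe; cases b <;> simp [BidirGraph.ohead, BidirGraph.otail, eflip]

@[simp] lemma otail_eflip (B : BidirGraph V E) (oe : E × Bool) :
    B.otail (eflip oe) = B.ohead oe := by
  obtain ⟨e, b⟩ := oe; cases b <;> simp [BidirGraph.ohead, BidirGraph.otail, eflip]

lemma rstep_flip {B : BidirGraph V E} {a b : E × Bool} (h : Rstep B a b) :
    Rstep B (eflip b) (eflip a) := by
  obtain ⟨h1, h2⟩ := h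
  constructor
  · rw [ohead_eflip, otail_eflip, h1]
  · rw [ohead_eflip, fst_eflip, fst_eflip, ← h1]
    exact fun hh => h2 hh.symm

/-- Reverse a trail, flipping all orientations. -/
def erev (T : List (E × Bool)) : List (E × Bool) := (T.map eflip).reverse

@[simp] lemma length_erev (T : List (E × Bool)) : (erev T).length = T.length := by
  simp [erev]

@[simp] lemma erev_nil : erev ([] : List (E × Bool)) = [] := rfl

lemma mem_erev {T : List (E × Bool)} {e : E} {b : Bool} :
    (e, b) ∈ erev T ↔ (e, !b) ∈ T := by
  simp only [erev, mem_reverse, mem_map]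
  constructor
  · rintro ⟨⟨e', b'⟩, hm, heq⟩
    simp [eflip] at heq
    obtain ⟨rfl, rfl⟩ := heq
    simpa using hm
  · intro h
    exact ⟨(e, !b), h, by simp [eflip]⟩

lemma mapfst_erev (T : List (E × Bool)) :
    (erev T).map Prod.fst = (T.map Prod.fst).reverse := by
  simp only [erev, map_reverse, map_map]
  congr 1

lemma mapohead_erev (B : BidirGraph V E) (T : List (E × Bool)) :
    (erev T).map B.ohead = (T.map B.otail).reverse := by
  simp only [erev, map_reverse, map_map]
  congr 1
  exact List.map_congr_left fun oe _ => ohead_eflip B oe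

lemma head?_erev (T : List (E × Bool)) : (erev T).head? = T.getLast?.map eflip := by
  simp [erev, head?_reverse, getLast?_map]

lemma getLast?_erev (T : List (E × Bool)) : (erev T).getLast? = T.head?.map eflip := by
  simp [erev, getLast?_reverse, head?_map]

lemma chain'_erev {B : BidirGraph V E} {T : List (E × Bool)}
    (h : T.Chain' (Rstep B)) : (erev T).Chain' (Rstep B) := by
  unfold List.Chain' at h ⊢
  rw [erev, List.isChain_reverse, List.isChain_map]
  exact h.imp fun a b hab => rstep_flip hab

lemma tail_otail {B : BidirGraph V E} :
    ∀ {Z : List (E × Bool)}, Z.Chain' (Rstep B) →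
      (Z.map B.otail).tail = (Z.map B.ohead).dropLast := by
  intro Z
  induction Z with
  | nil => intro _; rfl
  | cons a t ih =>
    intro h
    cases t with
    | nil => rfl
    | cons b t' =>
      unfold List.Chain' at h
      rw [List.isChain_cons_cons] at h
      have h1 : B.otail b = B.ohead a := h.1.1.symm
      have := ih h.2
      simp only [map_cons, List.tail_cons] at this ⊢
      rw [List.dropLast_cons_of_ne_nil (by simp), ← this, h1]


lemma mem_dropLast_or_getLast? {A : Type} {l : List A} {a : A} (h : a ∈ l) :
    a ∈ l.dropLast ∨ l.getLast? = some a := by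
  have hne : l ≠ [] := List.ne_nil_of_mem h
  rw [← List.dropLast_concat_getLast hne] at h
  rcases List.mem_append.1 h with h' | h'
  · exact Or.inl h'
  · right
    rw [List.mem_singleton.1 h']
    exact List.getLast?_eq_getLast hne

lemma exists_split_last {A : Type} (p : A → Prop) :
    ∀ l : List A, (∃ a ∈ l, p a) →
      ∃ l₁ a l₂, l = l₁ ++ a :: l₂ ∧ p a ∧ ∀ b ∈ l₂, ¬ p b := by
  intro l
  induction l using List.reverseRecOn with
  | nil => intro h; simp at h
  | append_singleton l a ih =>
    intro h
    by_cases hpa : p a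
    · exact ⟨l, a, [], rfl, hpa, by simp⟩
    · have hl : ∃ x ∈ l, p x := by
        obtain ⟨x, hx, hpx⟩ := h
        rcases List.mem_append.1 hx with h' | h'
        · exact ⟨x, h', hpx⟩
        · rw [List.mem_singleton.1 h'] at hpx; exact absurd hpx hpa
      obtain ⟨l₁, b, l₂, heq, hpb, hfree⟩ := ih hl
      refine ⟨l₁, b, l₂ ++ [a], by rw [heq]; simp, hpb, ?_⟩
      intro c hc
      rcases List.mem_append.1 hc with h' | h'
      · exact hfree c h'
      · rw [List.mem_singleton.1 h']; exact hpa

lemma isRTrail_prefix {B : BidirGraph V E} {r : V} {P T : List (E × Bool)}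
    (h : B.IsRTrail r (P ++ T)) : B.IsRTrail r P := by
  obtain ⟨⟨hnd, hhd, hch⟩, hint⟩ := h
  refine ⟨⟨?_, ?_, (List.isChain_append.1 hch).1⟩, ?_⟩
  · rw [List.map_append] at hnd; exact hnd.of_append_left
  · intro oe hoe
    apply hhd
    cases P with
    | nil => simp at hoe
    | cons a t => rw [List.head?_append_of_ne_nil _ (by simp)]; exact hoe
  · intro v hv
    apply hint
    rcases eq_or_ne T [] with rfl | hT
    · simpa using hv
    · rw [BidirGraph.Internal, List.map_append,
        List.dropLast_append_of_ne_nil (by simpa using hT)]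
      exact List.mem_append_left _ ((List.dropLast_sublist _).subset hv)

lemma isRTrail_append {B : BidirGraph V E} {r : V} {P T : List (E × Bool)} {p0 : E × Bool}
    (hP : B.IsRTrail r P) (hlast : P.getLast? = some p0) (hw : B.ohead p0 ≠ r)
    (hch : T.Chain' (Rstep B)) (hnd : (T.map Prod.fst).Nodup)
    (hdisj : ∀ e b₁ b₂, (e, b₁) ∈ P → (e, b₂) ∈ T → False)
    (hjunc : ∀ t0 ∈ T.head?, Rstep B p0 t0)
    (hint : ∀ v ∈ (T.map B.ohead).dropLast, v ≠ r) :
    B.IsRTrail r (P ++ T) := by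
  have hPne : P ≠ [] := by rintro rfl; simp at hlast
  obtain ⟨⟨hnd', hhd', hch'⟩, hint'⟩ := hP
  refine ⟨⟨?_, ?_, ?_⟩, ?_⟩
  · rw [List.map_append, List.nodup_append]
    refine ⟨hnd', hnd, ?_⟩
    intro e he1 e' he2 hee
    subst hee
    obtain ⟨⟨e1, b1⟩, hm1, rfl⟩ := List.mem_map.1 he1
    obtain ⟨⟨e2, b2⟩, hm2, heq⟩ := List.mem_map.1 he2
    have he : e2 = e1 := heq
    subst he
    exact hdisj _ b1 b2 hm1 hm2
  · intro oe hoe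
    rw [List.head?_append_of_ne_nil _ hPne] at hoe
    exact hhd' oe hoe
  · unfold List.Chain'
    rw [List.isChain_append]
    refine ⟨hch', hch, ?_⟩
    intro x hx y hy
    rw [hlast, Option.mem_def, Option.some_inj] at hx
    subst hx
    exact hjunc y hy
  · intro v hv
    rcases eq_or_ne T [] with rfl | hT
    · exact hint' v (by simpa using hv)
    · rw [BidirGraph.Internal, List.map_append,
        List.dropLast_append_of_ne_nil (by simpa using hT)] at hv
      rcases List.mem_append.1 hv with h' | h'
      · rcases mem_dropLast_or_getLast? h' with h'' | h''
        · exact hint' v h''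
        · rw [List.getLast?_map, hlast] at h''
          simp only [Option.map_some, Option.some_inj] at h''
          rw [← h'']; exact hw
      · exact hint v h'

lemma otail_incident (B : BidirGraph V E) (oe : E × Bool) :
    B.Incident oe.1 (B.otail oe) := by
  obtain ⟨e, b⟩ := oe
  cases b <;> simp [BidirGraph.otail, BidirGraph.Incident]

lemma ohead_incident (B : BidirGraph V E) (oe : E × Bool) :
    B.Incident oe.1 (B.ohead oe) := by
  obtain ⟨e, b⟩ := oe
  cases b <;> simp [BidirGraph.ohead, BidirGraph.Incident]

lemma mk_undir {B : BidirGraph V E} {r : V} {g : E} {b : Bool}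
    (h1 : ∃ L, B.IsRTrail r L ∧ L.getLast? = some (g, b))
    (h2 : ∃ L, B.IsRTrail r L ∧ L.getLast? = some (g, !b)) :
    B.TrailUndirectable r g := by
  cases b
  · exact ⟨by simpa using h2, h1⟩
  · exact ⟨h1, by simpa using h2⟩

lemma undir_inc_ne_r {B : BidirGraph V E} {r : V} (hclean : B.EdgeClean r)
    {g : E} (hg : B.TrailUndirectable r g) {v : V} (hinc : B.Incident g v) :
    v ≠ r := by
  rintro rfl
  exact hclean ⟨_, ⟨g, hg, rfl⟩, ⟨g, Relation.ReflTransGen.refl, hinc⟩⟩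

/-- Key lemma: no two edge-disjoint r-trails ending at the same vertex `w ≠ r`
with opposite signs. -/
lemma no_opp_pair {B : BidirGraph V E} {r : V} (hclean : B.EdgeClean r) {w : V}
    (hw : w ≠ r) {P Z : List (E × Bool)} {p0 z0 : E × Bool}
    (hP : B.IsRTrail r P) (hZ : B.IsRTrail r Z)
    (hPl : P.getLast? = some p0) (hZl : Z.getLast? = some z0)
    (hPw : B.ohead p0 = w) (hZw : B.ohead z0 = w)
    (hsign : B.sign p0.1 w ≠ B.sign z0.1 w)
    (hdisj : ∀ e b₁ b₂, (e, b₁) ∈ P → (e, b₂) ∈ Z → False) : False := by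
  have hZne : Z ≠ [] := by rintro rfl; simp at hZl
  obtain ⟨zh, hzh⟩ : ∃ zh, Z.head? = some zh := by
    cases Z with
    | nil => exact absurd rfl hZne
    | cons a t => exact ⟨a, rfl⟩
  -- singleton prefix of Z is an r-trail ending in zh
  have hsingle : ∃ L, B.IsRTrail r L ∧ L.getLast? = some (zh.1, zh.2) := by
    refine ⟨[zh], ⟨⟨by simp, ?_, List.isChain_singleton _⟩, by simp [BidirGraph.Internal]⟩, by simp⟩
    intro oe hoe
    simp only [List.head?_cons, Option.mem_def, Option.some_inj] at hoe
    rw [← hoe]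
    exact hZ.1.2.1 zh hzh
  -- big trail P ++ erev Z ends in eflip zh
  have hbig : B.IsRTrail r (P ++ erev Z) := by
    refine isRTrail_append hP hPl (hPw ▸ hw) (chain'_erev hZ.1.2.2)
      (by rw [mapfst_erev]; exact List.nodup_reverse.2 hZ.1.1) ?_ ?_ ?_
    · intro e b₁ b₂ h1 h2
      exact hdisj e b₁ (!b₂) h1 (mem_erev.1 h2)
    · intro t0 ht0
      rw [head?_erev, hZl, Option.map_some, Option.mem_def, Option.some_inj] at ht0
      subst ht0
      refine ⟨?_, ?_⟩
      · rw [otail_eflip, hPw, hZw]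
      · rw [fst_eflip, hPw]; exact hsign
    · intro v hv
      rw [mapohead_erev, List.dropLast_reverse, tail_otail hZ.1.2.2] at hv
      exact hZ.2 v (List.mem_reverse.1 hv)
  have hbigl : (P ++ erev Z).getLast? = some (eflip zh) := by
    rw [List.getLast?_append_of_ne_nil _ (by simp [erev, hZne]), getLast?_erev, hzh,
      Option.map_some]
  -- so zh.1 is undirectable and incident with r
  have hundir : B.TrailUndirectable r zh.1 := by
    refine mk_undir hsingle ⟨P ++ erev Z, hbig, ?_⟩
    rw [hbigl]; rfl
  have hincr : B.Incident zh.1 r := by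
    have := hZ.1.2.1 zh hzh
    exact this ▸ otail_incident B zh
  exact undir_inc_ne_r hclean hundir hincr rfl


lemma bool_eq_of_ne_ne {a b s : Bool} (h1 : a ≠ s) (h2 : b ≠ s) : a = b := by
  cases a <;> cases b <;> cases s <;> simp_all

/-- The rerouting/exchange step for the main induction. -/
lemma core {B : BidirGraph V E} {r : V} (hclean : B.EdgeClean r) {n : ℕ} {w : V}
    (ih : ∀ (w' : V) (P' Q' Z' : List (E × Bool)) (p0' q0' z0' : E × Bool),
      P'.length + Q'.length + 2 * Z'.length ≤ n → w' ≠ r →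
      B.IsRTrail r P' → B.IsRTrail r Q' → B.IsRTrail r Z' →
      P'.getLast? = some p0' → Q'.getLast? = some q0' → Z'.getLast? = some z0' →
      B.ohead p0' = w' → B.ohead q0' = w' → B.ohead z0' = w' →
      B.sign p0'.1 w' = B.sign q0'.1 w' → B.sign z0'.1 w' ≠ B.sign p0'.1 w' →
      (∀ e b₁ b₂, (e, b₁) ∈ P' → (e, b₂) ∈ Q' → False) → False)
    {P Q Z : List (E × Bool)} {p0 q0 z0 : E × Bool} (hw : w ≠ r)
    (hP : B.IsRTrail r P) (hQ : B.IsRTrail r Q) (hZ : B.IsRTrail r Z)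
    (hPl : P.getLast? = some p0) (hQl : Q.getLast? = some q0) (hZl : Z.getLast? = some z0)
    (hPw : B.ohead p0 = w) (hQw : B.ohead q0 = w) (hZw : B.ohead z0 = w)
    (hpq : B.sign p0.1 w = B.sign q0.1 w) (hzp : B.sign z0.1 w ≠ B.sign p0.1 w)
    (hPQ : ∀ e b₁ b₂, (e, b₁) ∈ P → (e, b₂) ∈ Q → False)
    {Z₁ Z₂ : List (E × Bool)} {g : E} {c d : Bool}
    (hsplit : Z = Z₁ ++ (g, c) :: Z₂) (hgP : (g, d) ∈ P)
    (hZ₂ : ∀ oe ∈ Z₂, (∀ b, (oe.1, b) ∉ P) ∧ (∀ b, (oe.1, b) ∉ Q))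
    (hmeas : P.length + Q.length + 2 * Z.length ≤ n + 1) : False := by
  obtain ⟨P₁, P₂, hPsplit⟩ := List.append_of_mem hgP
  have hsplit' : Z = (Z₁ ++ [(g, c)]) ++ Z₂ := by rw [hsplit]; simp
  have hPsplit' : P = (P₁ ++ [(g, d)]) ++ P₂ := by rw [hPsplit]; simp
  have hZP : B.IsRTrail r (Z₁ ++ [(g, c)]) := isRTrail_prefix (hsplit' ▸ hZ)
  have hPP : B.IsRTrail r (P₁ ++ [(g, d)]) := isRTrail_prefix (hPsplit' ▸ hP)
  have hZPl : (Z₁ ++ [(g, c)]).getLast? = some (g, c) := List.getLast?_concat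
  have hPPl : (P₁ ++ [(g, d)]).getLast? = some (g, d) := List.getLast?_concat
  have hZchd := hZ.1.2.2
  unfold List.Chain' at hZchd
  rw [hsplit', List.isChain_append] at hZchd
  obtain ⟨hchZP, hchZ₂, hjuncZ⟩ := hZchd
  have hndZ := hZ.1.1
  rw [hsplit', List.map_append, List.nodup_append] at hndZ
  have hndZ₂ : (Z₂.map Prod.fst).Nodup := hndZ.2.1
  have hIntZ₂ : ∀ v ∈ (Z₂.map B.ohead).dropLast, v ≠ r := by
    intro v hv
    apply hZ.2
    rcases eq_or_ne Z₂ [] with rfl | hne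
    · simp at hv
    · rw [BidirGraph.Internal, hsplit', List.map_append,
        List.dropLast_append_of_ne_nil (by simpa using hne)]
      exact List.mem_append_right _ hv
  have hogc : Z₂ ≠ [] → B.ohead (g, c) ≠ r := by
    intro hne
    intro hcon
    apply hZ.2 (B.ohead (g, c)) _ hcon
    rw [BidirGraph.Internal, hsplit', List.map_append,
      List.dropLast_append_of_ne_nil (by simpa using hne)]
    exact List.mem_append_left _ (by simp)
  by_cases hdc : d = c
  · subst hdc
    rcases eq_or_ne Z₂ [] with rfl | hZ₂ne
    · -- (g,d) is the last edge of Z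
      have hz0 : z0 = (g, d) := by
        rw [hsplit', List.append_nil, List.getLast?_concat] at hZl
        exact (Option.some_inj.1 hZl).symm
      refine no_opp_pair hclean hw hQ hPP hQl hPPl hQw ?_ ?_ ?_
      · rw [← hZw, hz0]
      · have : B.sign z0.1 w ≠ B.sign q0.1 w := fun hcon => hzp (hcon.trans hpq.symm)
        rw [hz0] at this
        exact Ne.symm this
      · intro e b₁ b₂ ha hb
        have hbP : (e, b₂) ∈ P := by
          rw [hPsplit']; exact List.mem_append_left _ hb
        exact hPQ e b₂ b₁ hbP ha
    · -- reroute: W = (P₁ ++ [(g,d)]) ++ Z₂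
      have hW : B.IsRTrail r ((P₁ ++ [(g, d)]) ++ Z₂) := by
        refine isRTrail_append hPP hPPl (hogc hZ₂ne) hchZ₂ hndZ₂ ?_
          (fun t0 ht0 => hjuncZ (g, d) hZPl t0 ht0) hIntZ₂
        intro e b₁ b₂ ha hb
        have haP : (e, b₁) ∈ P := by
          rw [hPsplit']; exact List.mem_append_left _ ha
        exact (hZ₂ _ hb).1 b₁ haP
      have hWl : ((P₁ ++ [(g, d)]) ++ Z₂).getLast? = some z0 := by
        rw [List.getLast?_append_of_ne_nil _ hZ₂ne]
        rw [hsplit', List.getLast?_append_of_ne_nil _ hZ₂ne] at hZl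
        exact hZl
      refine no_opp_pair hclean hw hQ hW hQl hWl hQw hZw
        (fun hcon => hzp (hcon.symm.trans hpq.symm)) ?_
      intro e b₁ b₂ ha hb
      rcases List.mem_append.1 hb with h' | h'
      · have hbP : (e, b₂) ∈ P := by
          rw [hPsplit']; exact List.mem_append_left _ h'
        exact hPQ e b₂ b₁ hbP ha
      · exact (hZ₂ _ h').2 b₁ ha
  · -- opposite orientations: g is undirectable, recurse
    have hd : d = !c := by revert hdc; cases c <;> cases d <;> decide
    subst hd
    have hundir : B.TrailUndirectable r g :=
      mk_undir ⟨_, hZP, hZPl⟩ ⟨_, hPP, hPPl⟩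
    have hw₁ : B.ohead (g, c) ≠ r :=
      undir_inc_ne_r hclean hundir (ohead_incident B (g, c))
    have hot : B.otail (g, !c) = B.ohead (g, c) := by
      cases c <;> simp [BidirGraph.otail, BidirGraph.ohead]
    have hP₁ne : P₁ ≠ [] := by
      rintro rfl
      have hh : P.head? = some (g, !c) := by rw [hPsplit]; rfl
      have := hP.1.2.1 (g, !c) hh
      rw [hot] at this
      exact hw₁ this
    obtain ⟨p₁0, hp₁0⟩ : ∃ x, P₁.getLast? = some x := by
      cases hx : P₁.getLast? with
      | none => exact absurd (List.getLast?_eq_none_iff.1 hx) hP₁ne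
      | some x => exact ⟨x, rfl⟩
    have hchPP := hPP.1.2.2
    unfold List.Chain' at hchPP
    rw [List.isChain_append] at hchPP
    have hjP : Rstep B p₁0 (g, !c) := hchPP.2.2 p₁0 hp₁0 (g, !c) rfl
    have hP₁w : B.ohead p₁0 = B.ohead (g, c) := by rw [hjP.1, hot]
    have hP₁sign : B.sign p₁0.1 (B.ohead (g, c)) ≠ B.sign g (B.ohead (g, c)) := by
      have h2 := hjP.2
      rw [hP₁w] at h2
      exact h2
    have hP₁ : B.IsRTrail r P₁ := isRTrail_prefix (B := B) (T := (g, !c) :: P₂) (hPsplit ▸ hP)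
    have hQ' : B.IsRTrail r (Q ++ erev Z₂) := by
      refine isRTrail_append hQ hQl (hQw ▸ hw) (chain'_erev hchZ₂)
        (by rw [mapfst_erev]; exact List.nodup_reverse.2 hndZ₂)
        (fun e b₁ b₂ h1 h2 => (hZ₂ _ (mem_erev.1 h2)).2 b₁ h1) ?_ ?_
      · intro t0 ht0
        rw [head?_erev] at ht0
        cases hZ₂l : Z₂.getLast? with
        | none => rw [hZ₂l] at ht0; simp at ht0
        | some zl =>
          rw [hZ₂l, Option.map_some, Option.mem_def, Option.some_inj] at ht0
          subst ht0
          have hz0 : zl = z0 := by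
            have hne : Z₂ ≠ [] := by rintro rfl; simp at hZ₂l
            rw [hsplit', List.getLast?_append_of_ne_nil _ hne, hZ₂l] at hZl
            exact Option.some_inj.1 hZl
          subst hz0
          constructor
          · rw [otail_eflip, hQw, hZw]
          · rw [fst_eflip, hQw]
            exact fun hcon => hzp (hcon.symm.trans hpq.symm)
      · intro v hv
        rw [mapohead_erev, List.dropLast_reverse, tail_otail hchZ₂] at hv
        exact hIntZ₂ v (List.mem_reverse.1 hv)
    have hQ'pack : ∃ q0', (Q ++ erev Z₂).getLast? = some q0' ∧
        B.ohead q0' = B.ohead (g, c) ∧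
        B.sign q0'.1 (B.ohead (g, c)) ≠ B.sign g (B.ohead (g, c)) := by
      rcases eq_or_ne Z₂ [] with rfl | hne
      · have hz0 : z0 = (g, c) := by
          rw [hsplit', List.append_nil, List.getLast?_concat] at hZl
          exact (Option.some_inj.1 hZl).symm
        have hww : w = B.ohead (g, c) := by rw [← hZw, hz0]
        refine ⟨q0, by simpa using hQl, by rw [hQw, hww], ?_⟩
        have h3 : B.sign z0.1 w ≠ B.sign q0.1 w := fun hcon => hzp (hcon.trans hpq.symm)
        rw [hz0] at h3
        rw [← hww]
        exact Ne.symm h3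
      · obtain ⟨t, ts, rfl⟩ : ∃ t ts, Z₂ = t :: ts := by
          cases Z₂ with
          | nil => exact absurd rfl hne
          | cons t ts => exact ⟨t, ts, rfl⟩
        have hjZ : Rstep B (g, c) t := hjuncZ (g, c) hZPl t rfl
        refine ⟨eflip t, ?_, ?_, ?_⟩
        · rw [List.getLast?_append_of_ne_nil _ (by simp [erev]), getLast?_erev]; rfl
        · rw [ohead_eflip]; exact hjZ.1.symm
        · rw [fst_eflip]
          exact Ne.symm hjZ.2
    obtain ⟨q0', hQ'l, hQ'w, hQ'sign⟩ := hQ'pack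
    have hsame : B.sign p₁0.1 (B.ohead (g, c)) = B.sign q0'.1 (B.ohead (g, c)) :=
      bool_eq_of_ne_ne hP₁sign hQ'sign
    have hdisj' : ∀ e b₁ b₂, (e, b₁) ∈ P₁ → (e, b₂) ∈ Q ++ erev Z₂ → False := by
      intro e b₁ b₂ h1 h2
      have h1P : (e, b₁) ∈ P := by rw [hPsplit]; exact List.mem_append_left _ h1
      rcases List.mem_append.1 h2 with h' | h'
      · exact hPQ e b₁ b₂ h1P h'
      · exact (hZ₂ _ (mem_erev.1 h')).1 b₁ h1P
    have hlen : P₁.length + (Q ++ erev Z₂).length + 2 * (Z₁ ++ [(g, c)]).length ≤ n := by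
      have l1 : P.length = P₁.length + P₂.length + 1 := by
        rw [hPsplit]; simp [List.length_append]; omega
      have l2 : Z.length = Z₁.length + Z₂.length + 1 := by
        rw [hsplit]; simp [List.length_append]; omega
      have l3 : (Q ++ erev Z₂).length = Q.length + Z₂.length := by
        simp [List.length_append]
      have l4 : (Z₁ ++ [(g, c)]).length = Z₁.length + 1 := by
        simp [List.length_append]
      omega
    exact ih _ P₁ (Q ++ erev Z₂) (Z₁ ++ [(g, c)]) p₁0 q0' (g, c) hlen hw₁ hP₁ hQ' hZP
      hp₁0 hQ'l hZPl hP₁w hQ'w rfl hsame (Ne.symm hP₁sign) hdisj'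


/-- Main induction: no "T-configuration" (two edge-disjoint same-sign r-trails plus an
opposite-sign r-trail, all ending at the same non-root vertex) exists. -/
lemma no_Tconfig {B : BidirGraph V E} {r : V} (hclean : B.EdgeClean r) :
    ∀ n : ℕ, ∀ (w : V) (P Q Z : List (E × Bool)) (p0 q0 z0 : E × Bool),
      P.length + Q.length + 2 * Z.length ≤ n → w ≠ r →
      B.IsRTrail r P → B.IsRTrail r Q → B.IsRTrail r Z →
      P.getLast? = some p0 → Q.getLast? = some q0 → Z.getLast? = some z0 →
      B.ohead p0 = w → B.ohead q0 = w → B.ohead z0 = w →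
      B.sign p0.1 w = B.sign q0.1 w → B.sign z0.1 w ≠ B.sign p0.1 w →
      (∀ e b₁ b₂, (e, b₁) ∈ P → (e, b₂) ∈ Q → False) → False := by
  intro n
  induction n with
  | zero =>
    intro w P Q Z p0 q0 z0 hlen _ _ _ _ hPl _ _ _ _ _ _ _ _
    have hne : P ≠ [] := by rintro rfl; simp at hPl
    have : 0 < P.length := List.length_pos_iff.2 hne
    omega
  | succ n ih =>
    intro w P Q Z p0 q0 z0 hlen hw hP hQ hZ hPl hQl hZl hPw hQw hZw hpq hzp hPQ
    by_cases h1 : ∃ e b₁ b₂, (e, b₁) ∈ Z ∧ (e, b₂) ∈ P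
    · by_cases h2 : ∃ e b₁ b₂, (e, b₁) ∈ Z ∧ (e, b₂) ∈ Q
      · classical
        obtain ⟨e, b₁, b₂, hZe, hPe⟩ := h1
        have hex : ∃ a ∈ Z, (∃ b, (a.1, b) ∈ P) ∨ (∃ b, (a.1, b) ∈ Q) :=
          ⟨(e, b₁), hZe, Or.inl ⟨b₂, hPe⟩⟩
        obtain ⟨Z₁, z, Z₂, hsplit, hpz, hfree⟩ :=
          exists_split_last (fun oe => (∃ b, (oe.1, b) ∈ P) ∨ (∃ b, (oe.1, b) ∈ Q)) Z hex
        obtain ⟨g, c⟩ := z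
        have hZ₂ : ∀ oe ∈ Z₂, (∀ b, (oe.1, b) ∉ P) ∧ (∀ b, (oe.1, b) ∉ Q) := by
          intro oe hoe
          have h3 := hfree oe hoe
          push_neg at h3
          exact h3
        rcases hpz with ⟨d, hgP⟩ | ⟨d, hgQ⟩
        · exact core hclean ih hw hP hQ hZ hPl hQl hZl hPw hQw hZw hpq hzp hPQ
            hsplit hgP hZ₂ hlen
        · exact core hclean ih hw hQ hP hZ hQl hPl hZl hQw hPw hZw hpq.symm
            (fun hcon => hzp (hcon.trans hpq.symm))
            (fun e' b₁' b₂' ha hb => hPQ e' b₂' b₁' hb ha) hsplit hgQ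
            (fun oe hoe => ⟨(hZ₂ oe hoe).2, (hZ₂ oe hoe).1⟩) (by omega)
      · push_neg at h2
        exact no_opp_pair hclean hw hQ hZ hQl hZl hQw hZw
          (fun hcon => hzp (hcon.symm.trans hpq.symm))
          (fun e b₁ b₂ ha hb => h2 e b₂ b₁ hb ha)
    · push_neg at h1
      exact no_opp_pair hclean hw hP hZ hPl hZl hPw hZw (Ne.symm hzp)
        (fun e b₁ b₂ ha hb => h1 e b₂ b₁ hb ha)

end Aux

open BidirGraph in
/-- In an edge-clean, trail-reachable rooted bidirected graph, the maximum
number of pairwise edge-disjoint `r`–`x` trails to a vertex `x` of a trail-undirectable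
component equals 1. -/
theorem stmt6 {V E : Type} (B : BidirGraph V E) (r : V)
    (hclean : B.EdgeClean r) (hreach : B.TrailReachable r)
    (x : V) (hx : ∃ C : Set E, B.IsUComp r C ∧ B.VC C x) :
    (∃ L, B.IsRTrail r L ∧ B.trailEnd r L = x) ∧
      ¬ ∃ L₁ L₂, (B.IsRTrail r L₁ ∧ B.trailEnd r L₁ = x) ∧
        (B.IsRTrail r L₂ ∧ B.trailEnd r L₂ = x) ∧ BidirGraph.EdgeDisj L₁ L₂ := by
  obtain ⟨C, hC, hVC⟩ := hx
  obtain ⟨e₀, he₀, rfl⟩ := hC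
  obtain ⟨e, heC, hinc⟩ := hVC
  have hund : B.TrailUndirectable r e := by
    rcases Relation.ReflTransGen.cases_tail heC with h | ⟨c', _, hstep⟩
    · rwa [h]
    · exact hstep.2.1
  have hxr : x ≠ r := undir_inc_ne_r hclean hund hinc
  obtain ⟨b, A, D, hA, hAl, hD, hDl, hbx, hbx'⟩ :
      ∃ b A D, B.IsRTrail r A ∧ A.getLast? = some (e, b) ∧ B.IsRTrail r D ∧
        D.getLast? = some (e, !b) ∧ B.ohead (e, b) = x ∧ B.otail (e, !b) = x := by
    rcases hinc with h1 | h1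
    · obtain ⟨L1, hL1, hL1l⟩ := hund.1
      obtain ⟨L2, hL2, hL2l⟩ := hund.2
      exact ⟨false, L2, L1, hL2, hL2l, hL1, by simpa using hL1l,
        by simpa [BidirGraph.ohead] using h1, by simpa [BidirGraph.otail] using h1⟩
    · obtain ⟨L1, hL1, hL1l⟩ := hund.1
      obtain ⟨L2, hL2, hL2l⟩ := hund.2
      exact ⟨true, L1, L2, hL1, hL1l, hL2, by simpa using hL2l,
        by simpa [BidirGraph.ohead] using h1, by simpa [BidirGraph.otail] using h1⟩
  constructor
  · exact ⟨A, hA, by simp [BidirGraph.trailEnd, hAl, hbx]⟩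
  · rintro ⟨L₁, L₂, ⟨h₁, he₁⟩, ⟨h₂, he₂⟩, hdisj⟩
    obtain ⟨p0, hp0⟩ : ∃ x0, L₁.getLast? = some x0 := by
      cases hx0 : L₁.getLast? with
      | none =>
        exfalso; apply hxr
        rw [← he₁]
        simp [BidirGraph.trailEnd, List.getLast?_eq_none_iff.1 hx0]
      | some x0 => exact ⟨x0, rfl⟩
    obtain ⟨q0, hq0⟩ : ∃ x0, L₂.getLast? = some x0 := by
      cases hx0 : L₂.getLast? with
      | none =>
        exfalso; apply hxr
        rw [← he₂]
        simp [BidirGraph.trailEnd, List.getLast?_eq_none_iff.1 hx0]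
      | some x0 => exact ⟨x0, rfl⟩
    have hp0w : B.ohead p0 = x := by rw [← he₁]; simp [BidirGraph.trailEnd, hp0]
    have hq0w : B.ohead q0 = x := by rw [← he₂]; simp [BidirGraph.trailEnd, hq0]
    have hdisj' : ∀ e' b₁ b₂, (e', b₁) ∈ L₁ → (e', b₂) ∈ L₂ → False := hdisj
    by_cases hsg : B.sign p0.1 x = B.sign q0.1 x
    · by_cases hsz : B.sign e x = B.sign p0.1 x
      · -- use the trail D with its last edge removed
        have hDne : D ≠ [] := by rintro rfl; simp at hDl
        have hgl : D.getLast hDne = (e, !b) := by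
          have := List.getLast?_eq_getLast hDne
          rw [hDl] at this
          exact (Option.some_inj.1 this).symm
        have hD' : D = D.dropLast ++ [(e, !b)] := by
          conv_lhs => rw [← List.dropLast_concat_getLast hDne]
          rw [hgl]
        have hZ : B.IsRTrail r D.dropLast :=
          isRTrail_prefix (B := B) (T := [(e, !b)]) (hD' ▸ hD)
        have hD'ne : D.dropLast ≠ [] := by
          intro h0
          have hh : D.head? = some (e, !b) := by rw [hD', h0]; rfl
          have h3 := hD.1.2.1 _ hh
          rw [hbx'] at h3
          exact hxr h3
        obtain ⟨z0, hz0⟩ : ∃ z0, D.dropLast.getLast? = some z0 := by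
          cases hx0 : D.dropLast.getLast? with
          | none => exact absurd (List.getLast?_eq_none_iff.1 hx0) hD'ne
          | some x0 => exact ⟨x0, rfl⟩
        have hchD := hD.1.2.2
        unfold List.Chain' at hchD
        rw [hD', List.isChain_append] at hchD
        have hjD : Rstep B z0 (e, !b) := hchD.2.2 z0 hz0 _ rfl
        have hz0w : B.ohead z0 = x := by rw [hjD.1, hbx']
        have hz0s : B.sign z0.1 x ≠ B.sign p0.1 x := by
          have h3 := hjD.2
          rw [hz0w] at h3
          rw [← hsz]
          exact h3
        exact no_Tconfig hclean _ x L₁ L₂ D.dropLast p0 q0 z0 le_rfl hxr h₁ h₂ hZ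
          hp0 hq0 hz0 hp0w hq0w hz0w hsg hz0s hdisj'
      · exact no_Tconfig hclean _ x L₁ L₂ A p0 q0 (e, b) le_rfl hxr h₁ h₂ hA
          hp0 hq0 hAl hp0w hq0w hbx hsg hsz hdisj'
    · exact no_opp_pair hclean hxr h₁ h₂ hp0 hq0 hp0w hq0w hsg hdisj'
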